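/- Let X and Y be independent rate-1 exponential random variables and R > 0. Define g₁(y) = (2e^{2R} − e^R y − 2e^R√(e^{2R} − e^R y))/y² and g₂(y) = (2e^{2R} − e^R y + 2e^R√(e^{2R} − e^R y))/y² for y ∈ [1, e^R]. Then lim_{ρ→∞} ρ² · P( 2e^R/√(XY) − e^R/X − 1/Y ≥ ρ and e^{−2R} ≤ Y/X < 1 ) = ∫₁^{e^R} (y − 1)·( min{e^{2R}, g₂(y)} − max{1, g₁(y)} ) dy. -/

import Mathlib

open MeasureTheory ProbabilityTheory Filter

/-- The function `g₁` from Lemma 5. -/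
noncomputable def g1 (R y : ℝ) : ℝ :=
  (2 * Real.exp (2 * R) - Real.exp R * y -
      2 * Real.exp R * Real.sqrt (Real.exp (2 * R) - Real.exp R * y)) / y ^ 2

/-- The function `g₂` from Lemma 5. -/
noncomputable def g2 (R y : ℝ) : ℝ :=
  (2 * Real.exp (2 * R) - Real.exp R * y +
      2 * Real.exp R * Real.sqrt (Real.exp (2 * R) - Real.exp R * y)) / y ^ 2

open Set

namespace Stmt12

/-- the power function -/
noncomputable def pw (R : ℝ) (p : ℝ × ℝ) : ℝ :=
  2 * Real.exp R / Real.sqrt (p.1 * p.2) - Real.exp R / p.1 - 1 / p.2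

/-- outage set at SNR ρ -/
def S (R ρ : ℝ) : Set (ℝ × ℝ) :=
  {p | ρ ≤ pw R p ∧ Real.exp (-(2 * R)) ≤ p.2 / p.1 ∧ p.2 / p.1 < 1}

/-- the limiting (normalized) outage set -/
def A (R : ℝ) : Set (ℝ × ℝ) :=
  {p | 0 < p.1 ∧ 0 < p.2 ∧ 1 ≤ pw R p ∧ Real.exp (-(2 * R)) ≤ p.2 / p.1 ∧ p.2 / p.1 < 1}

/-- joint density -/
noncomputable def D (p : ℝ × ℝ) : ENNReal := exponentialPDF 1 p.1 * exponentialPDF 1 p.2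

lemma measurable_pw (R : ℝ) : Measurable (pw R) := by
  unfold pw
  fun_prop

lemma measurableSet_S (R ρ : ℝ) : MeasurableSet (S R ρ) := by
  have h1 : MeasurableSet {p : ℝ × ℝ | ρ ≤ pw R p} :=
    measurableSet_le measurable_const (measurable_pw R)
  have hr : Measurable fun p : ℝ × ℝ => p.2 / p.1 := by fun_prop
  have h2 : MeasurableSet {p : ℝ × ℝ | Real.exp (-(2 * R)) ≤ p.2 / p.1} :=
    measurableSet_le measurable_const hr
  have h3 : MeasurableSet {p : ℝ × ℝ | p.2 / p.1 < 1} :=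
    measurableSet_lt hr measurable_const
  exact (h1.inter (h2.inter h3))

lemma measurableSet_A (R : ℝ) : MeasurableSet (A R) := by
  have h0 : MeasurableSet {p : ℝ × ℝ | 0 < p.1} :=
    measurableSet_lt measurable_const measurable_fst
  have h0' : MeasurableSet {p : ℝ × ℝ | 0 < p.2} :=
    measurableSet_lt measurable_const measurable_snd
  exact h0.inter (h0'.inter (measurableSet_S R 1))

lemma measurable_D : Measurable D := by
  unfold D
  exact ((measurable_exponentialPDFReal 1).ennreal_ofReal.comp measurable_fst).mul
    ((measurable_exponentialPDFReal 1).ennreal_ofReal.comp measurable_snd)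

lemma expMeasure_eq : expMeasure 1 = volume.withDensity (exponentialPDF 1) := rfl

/-- product of the two exponential measures as a density against 2-d Lebesgue -/
lemma prod_expMeasure :
    (expMeasure 1).prod (expMeasure 1) =
      (volume.prod volume : Measure (ℝ × ℝ)).withDensity D := by
  haveI : IsProbabilityMeasure (expMeasure 1) := isProbabilityMeasure_expMeasure one_pos
  apply Measure.prod_eq
  intro s t hs ht
  have hm : Measurable (exponentialPDF 1) := (measurable_exponentialPDFReal 1).ennreal_ofReal
  rw [withDensity_apply _ (hs.prod ht), ← Measure.prod_restrict s t]
  unfold D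
  rw [lintegral_prod_mul hm.aemeasurable hm.aemeasurable, expMeasure_eq,
    withDensity_apply _ hs, withDensity_apply _ ht]

lemma lintegral_scale (f : ℝ → ENNReal) (hf : Measurable f) (ρ : ℝ) (hρ : 0 < ρ) :
    ∫⁻ x : ℝ, f (ρ⁻¹ * x) = ENNReal.ofReal ρ * ∫⁻ x : ℝ, f x := by
  have h := Real.map_volume_mul_left (a := ρ⁻¹) (inv_ne_zero hρ.ne')
  rw [inv_inv, abs_of_pos hρ] at h
  rw [← lintegral_map hf (measurable_const_mul ρ⁻¹), h, lintegral_smul_measure, smul_eq_mul]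

/-- scaling identity -/
lemma scaling (R ρ : ℝ) (hρ : 0 < ρ) :
    (ENNReal.ofReal ρ * ENNReal.ofReal ρ) * ((expMeasure 1).prod (expMeasure 1)) (S R ρ)
      = ∫⁻ p : ℝ × ℝ, (S R ρ).indicator D (ρ⁻¹ * p.1, ρ⁻¹ * p.2) ∂(volume.prod volume) := by
  have hFm : Measurable ((S R ρ).indicator D) := measurable_D.indicator (measurableSet_S R ρ)
  set F := (S R ρ).indicator D with hF
  have hcomp : Measurable fun p : ℝ × ℝ => F (ρ⁻¹ * p.1, ρ⁻¹ * p.2) := by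
    apply hFm.comp
    fun_prop
  have hμS : ((expMeasure 1).prod (expMeasure 1)) (S R ρ) = ∫⁻ p : ℝ × ℝ, F p ∂(volume.prod volume) := by
    rw [prod_expMeasure, withDensity_apply _ (measurableSet_S R ρ), ← lintegral_indicator (measurableSet_S R ρ) D]
  have h1 : ∫⁻ p : ℝ × ℝ, F (ρ⁻¹ * p.1, ρ⁻¹ * p.2) ∂(volume.prod volume)
      = ∫⁻ x : ℝ, ∫⁻ y : ℝ, F (ρ⁻¹ * x, ρ⁻¹ * y) := lintegral_prod _ hcomp.aemeasurable
  have h2 : ∀ x : ℝ, ∫⁻ y : ℝ, F (ρ⁻¹ * x, ρ⁻¹ * y) = ENNReal.ofReal ρ * ∫⁻ y : ℝ, F (ρ⁻¹ * x, y) := by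
    intro x
    exact lintegral_scale (fun y => F (ρ⁻¹ * x, y)) (hFm.comp measurable_prodMk_left) ρ hρ
  have hG : Measurable fun x : ℝ => ∫⁻ y : ℝ, F (x, y) := by
    apply Measurable.lintegral_prod_right (f := fun x y => F (x, y))
    exact hFm
  have h3 : ∫⁻ x : ℝ, (∫⁻ y : ℝ, F (ρ⁻¹ * x, y)) = ENNReal.ofReal ρ * ∫⁻ x : ℝ, ∫⁻ y : ℝ, F (x, y) :=
    lintegral_scale (fun x => ∫⁻ y : ℝ, F (x, y)) hG ρ hρ
  rw [hμS, h1]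
  rw [lintegral_congr h2, lintegral_const_mul _ (by exact hG.comp (measurable_const_mul ρ⁻¹)), h3,
    ← lintegral_prod _ hFm.aemeasurable, mul_assoc]

lemma pw_scale (R ρ x y : ℝ) (hρ : 0 < ρ) (hx : 0 < x) (hy : 0 < y) :
    pw R (ρ⁻¹ * x, ρ⁻¹ * y) = ρ * pw R (x, y) := by
  have hs : (0:ℝ) < Real.sqrt (x * y) := Real.sqrt_pos.2 (mul_pos hx hy)
  have hsq : Real.sqrt (ρ⁻¹ * x * (ρ⁻¹ * y)) = ρ⁻¹ * Real.sqrt (x * y) := by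
    rw [show ρ⁻¹ * x * (ρ⁻¹ * y) = ρ⁻¹ ^ 2 * (x * y) by ring,
      Real.sqrt_mul (sq_nonneg _), Real.sqrt_sq (inv_nonneg.2 hρ.le)]
  unfold pw
  simp only
  rw [hsq]
  field_simp

/-- pointwise identification after scaling -/
lemma pointwise (R ρ : ℝ) (hρ : 0 < ρ) (p : ℝ × ℝ) :
    (S R ρ).indicator D (ρ⁻¹ * p.1, ρ⁻¹ * p.2)
      = (A R).indicator (fun q : ℝ × ℝ => ENNReal.ofReal (Real.exp (-(q.1 + q.2) / ρ))) p := by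
  obtain ⟨x, y⟩ := p
  have hρ' : ρ⁻¹ ≠ 0 := inv_ne_zero hρ.ne'
  have hratio : (ρ⁻¹ * y) / (ρ⁻¹ * x) = y / x := mul_div_mul_left y x hρ'
  by_cases hA : (x, y) ∈ A R
  · obtain ⟨hx, hy, hpw, hr1, hr2⟩ := hA
    simp only at hx hy hpw hr1 hr2
    have hmem : (ρ⁻¹ * x, ρ⁻¹ * y) ∈ S R ρ := by
      refine ⟨?_, ?_, ?_⟩
      · show ρ ≤ pw R (ρ⁻¹ * x, ρ⁻¹ * y)
        rw [pw_scale R ρ x y hρ hx hy]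
        exact le_mul_of_one_le_right hρ.le hpw
      · show Real.exp (-(2*R)) ≤ (ρ⁻¹ * y) / (ρ⁻¹ * x)
        rw [hratio]; exact hr1
      · show (ρ⁻¹ * y) / (ρ⁻¹ * x) < 1
        rw [hratio]; exact hr2
    rw [Set.indicator_of_mem hmem, Set.indicator_of_mem (by exact ⟨hx, hy, hpw, hr1, hr2⟩)]
    unfold D
    simp only
    rw [exponentialPDF_of_nonneg (by positivity), exponentialPDF_of_nonneg (by positivity),
      ← ENNReal.ofReal_mul (by positivity)]
    simp only [one_mul]
    rw [← Real.exp_add]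
    congr 1
    field_simp
    ring
  · rw [Set.indicator_of_notMem hA]
    by_cases hS : (ρ⁻¹ * x, ρ⁻¹ * y) ∈ S R ρ
    · obtain ⟨hpw, hr1, hr2⟩ := hS
      simp only at hpw hr1 hr2
      rw [hratio] at hr1 hr2
      rcases lt_trichotomy x 0 with hx | hx | hx
      · have hD : D (ρ⁻¹ * x, ρ⁻¹ * y) = 0 := by
          unfold D
          simp only
          rw [exponentialPDF_of_neg (by exact mul_neg_of_pos_of_neg (inv_pos.2 hρ) hx), zero_mul]
        show (S R ρ).indicator D (ρ⁻¹ * x, ρ⁻¹ * y) = 0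
        exact Set.indicator_apply_eq_zero.2 fun _ => hD
      · exfalso
        rw [hx, div_zero] at hr1
        exact absurd hr1 (not_le.2 (Real.exp_pos _))
      · rcases le_or_gt y 0 with hy | hy
        · exfalso
          have : y / x ≤ 0 := div_nonpos_of_nonpos_of_nonneg hy hx.le
          exact absurd (hr1.trans this) (not_le.2 (Real.exp_pos _))
        · exfalso
          apply hA
          refine ⟨hx, hy, ?_, hr1, hr2⟩
          rw [pw_scale R ρ x y hρ hx hy] at hpw
          show 1 ≤ pw R (x, y)
          nlinarith [hpw]
    · rw [Set.indicator_of_notMem hS]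

lemma exp_two_mul_eq (R : ℝ) : Real.exp (2 * R) = Real.exp R ^ 2 := by
  rw [two_mul, Real.exp_add, sq]

lemma g1_eq (R y : ℝ) (hcy : Real.exp R * y ≤ Real.exp R ^ 2) :
    g1 R y = (Real.exp R - Real.sqrt (Real.exp R ^ 2 - Real.exp R * y)) ^ 2 / y ^ 2 := by
  set c := Real.exp R
  set d := Real.sqrt (c ^ 2 - c * y) with hd
  have hd2 : d ^ 2 = c ^ 2 - c * y := Real.sq_sqrt (by linarith)
  unfold g1
  rw [exp_two_mul_eq]
  have : (c - d) ^ 2 = 2 * c ^ 2 - c * y - 2 * c * d := by nlinarith [hd2]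
  rw [this]

lemma g2_eq (R y : ℝ) (hcy : Real.exp R * y ≤ Real.exp R ^ 2) :
    g2 R y = (Real.exp R + Real.sqrt (Real.exp R ^ 2 - Real.exp R * y)) ^ 2 / y ^ 2 := by
  set c := Real.exp R
  set d := Real.sqrt (c ^ 2 - c * y) with hd
  have hd2 : d ^ 2 = c ^ 2 - c * y := Real.sq_sqrt (by linarith)
  unfold g2
  rw [exp_two_mul_eq]
  have : (c + d) ^ 2 = 2 * c ^ 2 - c * y + 2 * c * d := by nlinarith [hd2]
  rw [this]

/-- the power condition as a quadratic condition -/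
lemma pw_iff (R a b : ℝ) (hb : 0 < b) (hba : b < a) :
    1 ≤ pw R (a, b) ↔
      (b + 1) * a - 2 * Real.exp R * Real.sqrt (a * b) + Real.exp R * b ≤ 0 := by
  have ha : 0 < a := hb.trans hba
  set c := Real.exp R with hc
  have hc0 : 0 < c := Real.exp_pos R
  set s := Real.sqrt (a * b) with hs
  have hs0 : 0 < s := Real.sqrt_pos.2 (mul_pos ha hb)
  have hs2 : s ^ 2 = a * b := Real.sq_sqrt (mul_pos ha hb).le
  have hpw : pw R (a, b) = (2 * c * s - c * b - a) / (a * b) := by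
    unfold pw
    simp only
    rw [← hs, ← hc]
    rw [show a * b = s ^ 2 from hs2.symm]
    field_simp
    linear_combination (-(c * b + a)) * hs2
  rw [hpw, le_div_iff₀ (mul_pos ha hb), one_mul]
  constructor <;> intro h <;> nlinarith [h]

lemma le_of_sq_le_sq' (x z : ℝ) (hz : 0 ≤ z) (h : x ^ 2 ≤ z ^ 2) : x ≤ z := by
  nlinarith [sq_nonneg (x + z), sq_nonneg (x - z)]

/-- the quadratic condition as an interval condition -/
lemma quad_iff (R a b : ℝ) (hb : 0 < b) (ha : 0 < a) (hbc : b + 1 ≤ Real.exp R) :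
    (b + 1) * a - 2 * Real.exp R * Real.sqrt (a * b) + Real.exp R * b ≤ 0
      ↔ b * g1 R (b + 1) ≤ a ∧ a ≤ b * g2 R (b + 1) := by
  set c := Real.exp R with hc
  have hc0 : 0 < c := Real.exp_pos R
  set y := b + 1 with hy
  have hy0 : (0:ℝ) < y := by linarith
  have hy1 : (1:ℝ) ≤ y := by linarith
  have hcy : c * y ≤ c ^ 2 := by nlinarith
  set d := Real.sqrt (c ^ 2 - c * y) with hd
  have hd0 : 0 ≤ d := Real.sqrt_nonneg _
  have hd2 : d ^ 2 = c ^ 2 - c * y := Real.sq_sqrt (by linarith)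
  have hdc : d ≤ c := by
    calc d ≤ Real.sqrt (c ^ 2) := Real.sqrt_le_sqrt (by nlinarith)
    _ = c := Real.sqrt_sq hc0.le
  set u := Real.sqrt a with hu
  set v := Real.sqrt b with hv
  have hu0 : 0 < u := Real.sqrt_pos.2 ha
  have hv0 : 0 < v := Real.sqrt_pos.2 hb
  have hu2 : u ^ 2 = a := Real.sq_sqrt ha.le
  have hv2 : v ^ 2 = b := Real.sq_sqrt hb.le
  have hsuv : Real.sqrt (a * b) = u * v := by rw [Real.sqrt_mul ha.le, hu, hv]
  have hg1' : b * g1 R y = (c - d) ^ 2 * b / y ^ 2 := by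
    rw [g1_eq R y hcy, ← hc, ← hd]; ring
  have hg2' : b * g2 R y = (c + d) ^ 2 * b / y ^ 2 := by
    rw [g2_eq R y hcy, ← hc, ← hd]; ring
  have key : (y * u - (c - d) * v) * (y * u - (c + d) * v)
      = y * ((b + 1) * a - 2 * c * (u * v) + c * b) := by
    have expand : (y * u - (c - d) * v) * (y * u - (c + d) * v)
        = y ^ 2 * u ^ 2 - 2 * c * y * (u * v) + (c ^ 2 - d ^ 2) * v ^ 2 := by ring
    rw [expand, hd2, hu2, hv2, ← hy]
    ring
  rw [hsuv, hg1', hg2']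
  have hcd0 : 0 ≤ c - d := by linarith
  have hyu0 : 0 ≤ y * u := (mul_pos hy0 hu0).le
  have hcdv0 : 0 ≤ (c - d) * v := mul_nonneg hcd0 hv0.le
  have hcdv0' : 0 ≤ (c + d) * v := mul_nonneg (by linarith) hv0.le
  have e1 : (y * u) ^ 2 = a * y ^ 2 := by linear_combination y ^ 2 * hu2
  have e2 : ((c + d) * v) ^ 2 = (c + d) ^ 2 * b := by linear_combination (c + d) ^ 2 * hv2
  have e3 : ((c - d) * v) ^ 2 = (c - d) ^ 2 * b := by linear_combination (c - d) ^ 2 * hv2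
  constructor
  · intro h
    have hprod : (y * u - (c - d) * v) * (y * u - (c + d) * v) ≤ 0 := by
      rw [key]; exact mul_nonpos_of_nonneg_of_nonpos hy0.le h
    have hdv : 0 ≤ d * v := mul_nonneg hd0 hv0.le
    have h1 : (c - d) * v ≤ y * u ∧ y * u ≤ (c + d) * v := by
      rcases mul_nonpos_iff.1 hprod with ⟨h1, h2⟩ | ⟨h1, h2⟩
      · exact ⟨by linarith, by linarith⟩
      · exact ⟨by linarith, by linarith⟩
    have hb1 : ((c - d) * v) ^ 2 ≤ (y * u) ^ 2 := pow_le_pow_left₀ hcdv0 h1.1 2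
    have hb2 : (y * u) ^ 2 ≤ ((c + d) * v) ^ 2 := pow_le_pow_left₀ hyu0 h1.2 2
    constructor
    · rw [div_le_iff₀ (by positivity)]; linarith [hb1, e1, e3]
    · rw [le_div_iff₀ (by positivity)]; linarith [hb2, e1, e2]
  · rintro ⟨h1, h2⟩
    rw [div_le_iff₀ (by positivity)] at h1
    rw [le_div_iff₀ (by positivity)] at h2
    have hb1 : ((c - d) * v) ^ 2 ≤ (y * u) ^ 2 := by linarith [h1, e1, e3]
    have hb2 : (y * u) ^ 2 ≤ ((c + d) * v) ^ 2 := by linarith [h2, e1, e2]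
    have hl : (c - d) * v ≤ y * u := le_of_sq_le_sq' _ _ hyu0 hb1
    have hr : y * u ≤ (c + d) * v := le_of_sq_le_sq' _ _ hcdv0' hb2
    have hprod : (y * u - (c - d) * v) * (y * u - (c + d) * v) ≤ 0 :=
      mul_nonpos_of_nonneg_of_nonpos (by linarith) (by linarith)
    rw [key] at hprod
    have h0 : y * ((b + 1) * a - 2 * c * (u * v) + c * b) ≤ y * 0 := by rwa [mul_zero]
    exact (mul_le_mul_iff_of_pos_left hy0).1 h0

lemma mem_A_iff (R a b : ℝ) (ha : 0 < a) (hb : 0 < b) :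
    (a, b) ∈ A R ↔ 1 ≤ pw R (a, b) ∧ b < a ∧ a ≤ Real.exp R ^ 2 * b := by
  have hc2 : (0:ℝ) < Real.exp R ^ 2 := by positivity
  have hexp : Real.exp (-(2 * R)) = (Real.exp R ^ 2)⁻¹ := by
    rw [Real.exp_neg, exp_two_mul_eq]
  unfold A
  simp only [Set.mem_setOf_eq]
  constructor
  · rintro ⟨-, -, hpw, hr1, hr2⟩
    refine ⟨hpw, (div_lt_one ha).1 hr2, ?_⟩
    rw [le_div_iff₀ ha, hexp] at hr1
    exact (inv_mul_le_iff₀ hc2).1 hr1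
  · rintro ⟨hpw, hba, hab⟩
    refine ⟨ha, hb, hpw, ?_, (div_lt_one ha).2 hba⟩
    rw [le_div_iff₀ ha, hexp]
    exact (inv_mul_le_iff₀ hc2).2 hab

lemma A_subset (R : ℝ) (hR : 0 < R) :
    A R ⊆ Ioc (0:ℝ) (2 * Real.exp R ^ 2) ×ˢ Ioc (0:ℝ) (2 * Real.exp R) := by
  rintro ⟨a, b⟩ hmem
  have ha : 0 < a := hmem.1
  have hb : 0 < b := hmem.2.1
  obtain ⟨hpw, hba, hab⟩ := (mem_A_iff R a b ha hb).1 hmem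
  set c := Real.exp R with hcdef
  have hc0 : 0 < c := Real.exp_pos R
  set s := Real.sqrt (a * b) with hs
  have hs0 : 0 < s := Real.sqrt_pos.2 (mul_pos ha hb)
  have hs2 : s ^ 2 = a * b := Real.sq_sqrt (mul_pos ha hb).le
  have hca : 0 < c / a := by positivity
  have h1b : 0 < 1 / b := by positivity
  unfold pw at hpw
  simp only at hpw
  rw [← hs, ← hcdef] at hpw
  have h2cs : 1 ≤ 2 * c / s := by linarith
  rw [le_div_iff₀ hs0, one_mul] at h2cs
  have habc : a * b ≤ 4 * c ^ 2 := by nlinarith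
  have hb2c : b ≤ 2 * c := by
    refine le_of_sq_le_sq' b (2 * c) (by positivity) ?_
    nlinarith [mul_le_mul_of_nonneg_right hba.le hb.le]
  have ha2c : a ≤ 2 * c ^ 2 := by
    refine le_of_sq_le_sq' a (2 * c ^ 2) (by positivity) ?_
    nlinarith [mul_le_mul_of_nonneg_left hab ha.le,
      mul_le_mul_of_nonneg_left habc (sq_nonneg c)]
  exact ⟨⟨ha, ha2c⟩, ⟨hb, hb2c⟩⟩

lemma volume_A_ne_top (R : ℝ) (hR : 0 < R) :
    ((volume : Measure ℝ).prod volume) (A R) ≠ ⊤ := by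
  refine ne_top_of_le_ne_top ?_ (measure_mono (A_subset R hR))
  rw [Measure.prod_prod]
  exact ENNReal.mul_ne_top (by simp [Real.volume_Ioc, ENNReal.mul_eq_top]) (by simp [Real.volume_Ioc, ENNReal.mul_eq_top])

/-- dominated convergence -/
lemma dct (R : ℝ) (hR : 0 < R) :
    Tendsto (fun ρ : ℝ => ∫⁻ p : ℝ × ℝ,
        (A R).indicator (fun q : ℝ × ℝ => ENNReal.ofReal (Real.exp (-(q.1 + q.2) / ρ))) p
          ∂(volume.prod volume))
      atTop (nhds (((volume : Measure ℝ).prod volume) (A R))) := by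
  have hA := measurableSet_A R
  have hone : ∫⁻ p : ℝ × ℝ, (A R).indicator (fun _ => (1:ENNReal)) p ∂(volume.prod volume)
      = ((volume : Measure ℝ).prod volume) (A R) := by
    rw [lintegral_indicator hA, setLIntegral_one]
  have hmain := tendsto_lintegral_filter_of_dominated_convergence
    (μ := (volume : Measure ℝ).prod volume) (l := atTop)
    (F := fun ρ : ℝ => (A R).indicator
      (fun q : ℝ × ℝ => ENNReal.ofReal (Real.exp (-(q.1 + q.2) / ρ))))
    (f := (A R).indicator (fun _ => (1:ENNReal)))
    ((A R).indicator (fun _ => (1:ENNReal)))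
    ?_ ?_ ?_ ?_
  · rwa [hone] at hmain
  · refine Eventually.of_forall fun ρ => ?_
    refine Measurable.indicator ?_ hA
    fun_prop
  · filter_upwards [eventually_ge_atTop (0:ℝ)] with ρ hρ
    refine Eventually.of_forall fun q => ?_
    by_cases hq : q ∈ A R
    · rw [Set.indicator_of_mem hq, Set.indicator_of_mem hq]
      refine ENNReal.ofReal_le_one.2 (Real.exp_le_one_iff.2 ?_)
      have h1 : 0 < q.1 := hq.1
      have h2 : 0 < q.2 := hq.2.1
      exact div_nonpos_of_nonpos_of_nonneg (by linarith) hρ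
    · rw [Set.indicator_of_notMem hq, Set.indicator_of_notMem hq]
  · rw [hone]
    exact volume_A_ne_top R hR
  · refine Eventually.of_forall fun q => ?_
    by_cases hq : q ∈ A R
    · simp only [Set.indicator_of_mem hq]
      have h0 : Tendsto (fun ρ : ℝ => -(q.1 + q.2) / ρ) atTop (nhds 0) := by
        have h := (tendsto_inv_atTop_zero (𝕜 := ℝ)).const_mul (-(q.1 + q.2))
        rw [mul_zero] at h
        simpa [div_eq_mul_inv] using h
      have h1 : Tendsto (fun ρ : ℝ => Real.exp (-(q.1 + q.2) / ρ)) atTop (nhds 1) := by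
        have := (Real.continuous_exp.tendsto 0).comp h0
        rwa [Real.exp_zero] at this
      have h2 := (ENNReal.continuous_ofReal.tendsto 1).comp h1
      rwa [ENNReal.ofReal_one] at h2
    · simp only [Set.indicator_of_notMem hq]
      exact tendsto_const_nhds

/-- the slice of `A` at second coordinate `b`, for `b` in the good range -/
lemma slice_eq (R : ℝ) (hR : 0 < R) (b : ℝ) (hb : b ∈ Ioo (0:ℝ) (Real.exp R - 1)) :
    (volume : Measure ℝ) ((fun a => (a, b)) ⁻¹' A R)
      = ENNReal.ofReal ((b + 1 - 1) *
          (min (Real.exp (2 * R)) (g2 R (b + 1)) - max 1 (g1 R (b + 1)))) := by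
  obtain ⟨hb0, hbc⟩ := hb
  set c := Real.exp R with hcdef
  have hc0 : 0 < c := Real.exp_pos R
  have hbc' : b + 1 ≤ c := by linarith
  set lo := max b (b * g1 R (b + 1)) with hlo
  set hi := min (c ^ 2 * b) (b * g2 R (b + 1)) with hhi
  have hIoc : Ioc lo hi ⊆ (fun a => (a, b)) ⁻¹' A R := by
    rintro a ⟨hal, hau⟩
    have hba : b < a := lt_of_le_of_lt (le_max_left _ _) hal
    have ha : 0 < a := hb0.trans hba
    rw [Set.mem_preimage, mem_A_iff R a b ha hb0]
    refine ⟨?_, hba, hau.trans (min_le_left _ _)⟩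
    rw [pw_iff R a b hb0 hba, quad_iff R a b hb0 ha hbc']
    exact ⟨le_of_lt (lt_of_le_of_lt (le_max_right _ _) hal), hau.trans (min_le_right _ _)⟩
  have hIcc : (fun a => (a, b)) ⁻¹' A R ⊆ Icc lo hi := by
    intro a hmem
    rw [Set.mem_preimage] at hmem
    have ha : 0 < a := hmem.1
    obtain ⟨hpw, hba, hab⟩ := (mem_A_iff R a b ha hb0).1 hmem
    rw [pw_iff R a b hb0 hba, quad_iff R a b hb0 ha hbc'] at hpw
    exact ⟨max_le hba.le hpw.1, le_min hab hpw.2⟩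
  have h1 := measure_mono (μ := (volume : Measure ℝ)) hIoc
  have h2 := measure_mono (μ := (volume : Measure ℝ)) hIcc
  rw [Real.volume_Ioc] at h1
  rw [Real.volume_Icc] at h2
  have hveq : (volume : Measure ℝ) ((fun a => (a, b)) ⁻¹' A R) = ENNReal.ofReal (hi - lo) :=
    le_antisymm h2 h1
  rw [hveq]
  congr 1
  have hmin : hi = b * min (c ^ 2) (g2 R (b + 1)) := by
    rw [hhi]
    rcases le_total (c ^ 2) (g2 R (b + 1)) with h | h
    · rw [min_eq_left (by nlinarith), min_eq_left h]
      all_goals ring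
    · rw [min_eq_right (by nlinarith), min_eq_right h]
      all_goals ring
  have hmax : lo = b * max 1 (g1 R (b + 1)) := by
    rw [hlo]
    rcases le_total (1:ℝ) (g1 R (b + 1)) with h | h
    · rw [max_eq_right (by nlinarith), max_eq_right h]
      all_goals ring
    · rw [max_eq_left (by nlinarith), max_eq_left h]
      all_goals ring
  rw [hmin, hmax, exp_two_mul_eq, ← hcdef]
  ring

lemma slice_zero (R : ℝ) (hR : 0 < R) (b : ℝ) (hb : b ∉ Ioo (0:ℝ) (Real.exp R - 1)) :
    (volume : Measure ℝ) ((fun a => (a, b)) ⁻¹' A R) = 0 := by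
  have hempty : (fun a => (a, b)) ⁻¹' A R = ∅ := by
    ext a
    simp only [Set.mem_preimage, Set.mem_empty_iff_false, iff_false]
    intro hmem
    have ha : 0 < a := hmem.1
    have hb0 : 0 < b := hmem.2.1
    obtain ⟨hpw, hba, -⟩ := (mem_A_iff R a b ha hb0).1 hmem
    rw [pw_iff R a b hb0 hba] at hpw
    have hcb : Real.exp R ≤ b + 1 := by
      by_contra hlt
      push_neg at hlt
      exact hb (Set.mem_Ioo.2 ⟨hb0, by linarith⟩)
    set c := Real.exp R with hcdef
    have hc0 : 0 < c := Real.exp_pos R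
    set s := Real.sqrt (a * b) with hs
    have hs0 : 0 ≤ s := Real.sqrt_nonneg _
    have hs2 : s ^ 2 = a * b := Real.sq_sqrt (mul_pos ha hb0).le
    have h4 : ((b + 1) * a + c * b) * ((b + 1) * a + c * b) ≤ (2 * c * s) * (2 * c * s) :=
      mul_self_le_mul_self (by positivity) (by linarith)
    have e1 : ((b + 1) * a + c * b) ^ 2 ≤ 4 * c ^ 2 * (a * b) := by nlinarith [h4, hs2]
    have e3 : 4 * c ^ 2 * (a * b) ≤ 4 * (b + 1) * c * (a * b) := by
      nlinarith [mul_pos ha hb0, hc0, hcb]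
    have e4 : 0 < (b + 1) * a - c * b := by nlinarith
    nlinarith [e1, e3, mul_pos e4 e4]
  rw [hempty, measure_empty]

lemma integrand_nonneg (R : ℝ) (hR : 0 < R) (y : ℝ) (hy : y ∈ Icc (1:ℝ) (Real.exp R)) :
    0 ≤ (y - 1) * (min (Real.exp (2 * R)) (g2 R y) - max 1 (g1 R y)) := by
  obtain ⟨hy1, hyc⟩ := hy
  set c := Real.exp R with hcdef
  have hc0 : 0 < c := Real.exp_pos R
  have hc1 : 1 ≤ c := hy1.trans hyc
  have hy0 : (0:ℝ) < y := by linarith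
  have hcy : c * y ≤ c ^ 2 := by nlinarith
  set d := Real.sqrt (c ^ 2 - c * y) with hd
  have hd0 : 0 ≤ d := Real.sqrt_nonneg _
  have hd2 : d ^ 2 = c ^ 2 - c * y := Real.sq_sqrt (by linarith)
  have hdc : d ≤ c := by
    calc d ≤ Real.sqrt (c ^ 2) := Real.sqrt_le_sqrt (by nlinarith)
    _ = c := Real.sqrt_sq hc0.le
  have hg1 : g1 R y = (c - d) ^ 2 / y ^ 2 := by rw [g1_eq R y hcy, ← hcdef, ← hd]
  have hg2 : g2 R y = (c + d) ^ 2 / y ^ 2 := by rw [g2_eq R y hcy, ← hcdef, ← hd]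
  have h1 : g1 R y ≤ c / y := by
    rw [hg1, div_le_div_iff₀ (by positivity) hy0]
    nlinarith [mul_nonneg hd0 (sub_nonneg.2 hdc), hy0.le, hd2]
  have h2 : c / y ≤ g2 R y := by
    rw [hg2, div_le_div_iff₀ hy0 (by positivity)]
    nlinarith [mul_nonneg hd0 (by linarith : (0:ℝ) ≤ c + d), hy0.le, hd2]
  have h3 : 1 ≤ c / y := (one_le_div hy0).2 hyc
  have h4 : c / y ≤ Real.exp (2 * R) := by
    rw [exp_two_mul_eq, ← hcdef]
    calc c / y ≤ c := div_le_self hc0.le hy1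
    _ ≤ c ^ 2 := by nlinarith
  have hmax : max 1 (g1 R y) ≤ c / y := max_le h3 h1
  have hmin : c / y ≤ min (Real.exp (2 * R)) (g2 R y) := le_min h4 h2
  exact mul_nonneg (by linarith) (by linarith)

lemma volume_A_eq (R : ℝ) (hR : 0 < R) :
    ((volume : Measure ℝ).prod volume) (A R)
      = ENNReal.ofReal (∫ y in (1:ℝ)..Real.exp R,
          (y - 1) * (min (Real.exp (2 * R)) (g2 R y) - max 1 (g1 R y))) := by
  have hc1 : 1 < Real.exp R := by
    have := Real.add_one_le_exp R
    linarith
  rw [Measure.prod_apply_symm (measurableSet_A R)]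
  have hslice : (fun b : ℝ => (volume : Measure ℝ) ((fun a => (a, b)) ⁻¹' A R))
      = fun b : ℝ => (Ioo (0:ℝ) (Real.exp R - 1)).indicator
          (fun b => ENNReal.ofReal ((b + 1 - 1) *
            (min (Real.exp (2 * R)) (g2 R (b + 1)) - max 1 (g1 R (b + 1))))) b := by
    funext b
    by_cases hb : b ∈ Ioo (0:ℝ) (Real.exp R - 1)
    · rw [Set.indicator_of_mem hb, slice_eq R hR b hb]
    · rw [Set.indicator_of_notMem hb, slice_zero R hR b hb]
  rw [show (fun b : ℝ => (volume : Measure ℝ) ((fun a : ℝ => (a, b)) ⁻¹' A R)) =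
    (fun b : ℝ => (Ioo (0:ℝ) (Real.exp R - 1)).indicator
          (fun b => ENNReal.ofReal ((b + 1 - 1) *
            (min (Real.exp (2 * R)) (g2 R (b + 1)) - max 1 (g1 R (b + 1))))) b) from hslice,
    lintegral_indicator measurableSet_Ioo]
  have hg1m : Measurable (g1 R) := by unfold g1; fun_prop
  have hg2m : Measurable (g2 R) := by unfold g2; fun_prop
  have hFmeas : Measurable fun b : ℝ => (b + 1 - 1) *
      (min (Real.exp (2 * R)) (g2 R (b + 1)) - max 1 (g1 R (b + 1))) := by
    apply Measurable.mul
    · fun_prop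
    · apply Measurable.sub
      · exact (measurable_const.min (hg2m.comp (measurable_id.add_const 1)))
      · exact (measurable_const.max (hg1m.comp (measurable_id.add_const 1)))
  have hint : IntegrableOn (fun b : ℝ => (b + 1 - 1) *
      (min (Real.exp (2 * R)) (g2 R (b + 1)) - max 1 (g1 R (b + 1))))
      (Ioo (0:ℝ) (Real.exp R - 1)) := by
    apply Measure.integrableOn_of_bounded (M := (Real.exp R - 1) * Real.exp (2 * R))
    · simp [Real.volume_Ioo]
    · exact hFmeas.aestronglyMeasurable
    · rw [ae_restrict_iff' measurableSet_Ioo]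
      refine Eventually.of_forall fun b hb => ?_
      obtain ⟨hb0, hbc⟩ := hb
      have hnn := integrand_nonneg R hR (b + 1) ⟨by linarith, by linarith⟩
      rw [Real.norm_eq_abs, abs_of_nonneg hnn]
      have h5 : min (Real.exp (2 * R)) (g2 R (b + 1)) - max 1 (g1 R (b + 1))
          ≤ Real.exp (2 * R) := by
        have l1 := min_le_left (Real.exp (2 * R)) (g2 R (b + 1))
        have l2 := le_max_left (1:ℝ) (g1 R (b + 1))
        linarith
      have h6 : 0 ≤ min (Real.exp (2 * R)) (g2 R (b + 1)) - max 1 (g1 R (b + 1)) := by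
        nlinarith [hnn, hb0]
      nlinarith [h5, h6, hb0, hbc, Real.exp_pos (2 * R)]
  have hae : 0 ≤ᵐ[volume.restrict (Ioo (0:ℝ) (Real.exp R - 1))] fun b : ℝ =>
      (b + 1 - 1) * (min (Real.exp (2 * R)) (g2 R (b + 1)) - max 1 (g1 R (b + 1))) := by
    filter_upwards [ae_restrict_mem measurableSet_Ioo] with b hb
    exact integrand_nonneg R hR (b + 1) ⟨by linarith [hb.1], by linarith [hb.2]⟩
  rw [← ofReal_integral_eq_lintegral_ofReal hint hae]
  congr 1
  have hshift := intervalIntegral.integral_comp_add_right (a := (0:ℝ)) (b := Real.exp R - 1)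
    (fun y => (y - 1) * (min (Real.exp (2 * R)) (g2 R y) - max 1 (g1 R y))) 1
  rw [show (0:ℝ) + 1 = 1 by ring, show Real.exp R - 1 + 1 = Real.exp R by ring] at hshift
  rw [← hshift, intervalIntegral.integral_of_le (by linarith : (0:ℝ) ≤ Real.exp R - 1),
    MeasureTheory.integral_Ioc_eq_integral_Ioo]

end Stmt12

/-- High-SNR behavior of the hybrid-NOMA power outage probability: if `X = h_{2,1}` and
`Y = h_{2,2}` are i.i.d. rate-1 exponential channel gains, then
`ρ² · P(2e^R/√(XY) - e^R/X - 1/Y ≥ ρ, e^{-2R} ≤ Y/X < 1)` converges, as `ρ → ∞`, to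
`∫₁^{e^R} (y - 1)(min{e^{2R}, g₂(y)} - max{1, g₁(y)}) dy`. -/
theorem stmt_12 {Ω : Type*} [MeasurableSpace Ω] (μ : Measure Ω) [IsProbabilityMeasure μ]
    (X Y : Ω → ℝ) (hX : Measurable X) (hY : Measurable Y) (hXY : IndepFun X Y μ)
    (hXd : μ.map X = expMeasure 1) (hYd : μ.map Y = expMeasure 1)
    (R : ℝ) (hR : 0 < R) :
    Tendsto (fun ρ : ℝ => ρ ^ 2 *
        (μ {ω | ρ ≤ 2 * Real.exp R / Real.sqrt (X ω * Y ω) - Real.exp R / X ω - 1 / Y ω ∧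
                Real.exp (-(2 * R)) ≤ Y ω / X ω ∧ Y ω / X ω < 1}).toReal)
      atTop
      (nhds (∫ y in (1 : ℝ)..Real.exp R,
        (y - 1) * (min (Real.exp (2 * R)) (g2 R y) - max 1 (g1 R y)))) := by
  haveI hprob : IsProbabilityMeasure (expMeasure 1) := isProbabilityMeasure_expMeasure one_pos
  have hmap : μ.map (fun ω => (X ω, Y ω)) = (expMeasure 1).prod (expMeasure 1) := by
    exact ((indepFun_iff_map_prod_eq_prod_map_map hX.aemeasurable hY.aemeasurable).mp hXY).trans
      (by rw [hXd, hYd])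
  have hE : ∀ ρ : ℝ,
      μ {ω | ρ ≤ 2 * Real.exp R / Real.sqrt (X ω * Y ω) - Real.exp R / X ω - 1 / Y ω ∧
          Real.exp (-(2 * R)) ≤ Y ω / X ω ∧ Y ω / X ω < 1}
        = ((expMeasure 1).prod (expMeasure 1)) (Stmt12.S R ρ) := by
    intro ρ
    have hpre : {ω | ρ ≤ 2 * Real.exp R / Real.sqrt (X ω * Y ω) - Real.exp R / X ω - 1 / Y ω ∧
          Real.exp (-(2 * R)) ≤ Y ω / X ω ∧ Y ω / X ω < 1}
        = (fun ω => (X ω, Y ω)) ⁻¹' Stmt12.S R ρ := rfl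
    rw [hpre, ← hmap, Measure.map_apply (hX.prodMk hY) (Stmt12.measurableSet_S R ρ)]
  have hT0 : 0 ≤ ∫ y in (1:ℝ)..Real.exp R,
      (y - 1) * (min (Real.exp (2 * R)) (g2 R y) - max 1 (g1 R y)) := by
    apply intervalIntegral.integral_nonneg
    · have := Real.add_one_le_exp R
      linarith
    · intro y hy
      exact Stmt12.integrand_nonneg R hR y hy
  have hkey := Stmt12.dct R hR
  have hfin := Stmt12.volume_A_ne_top R hR
  have h2 := (ENNReal.tendsto_toReal hfin).comp hkey
  rw [Stmt12.volume_A_eq R hR, ENNReal.toReal_ofReal hT0] at h2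
  refine h2.congr' ?_
  filter_upwards [eventually_gt_atTop (0:ℝ)] with ρ hρ
  simp only [Function.comp]
  have e1 : ∫⁻ p : ℝ × ℝ,
      (Stmt12.A R).indicator (fun q : ℝ × ℝ => ENNReal.ofReal (Real.exp (-(q.1 + q.2) / ρ))) p
        ∂(volume.prod volume)
      = ENNReal.ofReal ρ * ENNReal.ofReal ρ * ((expMeasure 1).prod (expMeasure 1)) (Stmt12.S R ρ) :=
    ((lintegral_congr (Stmt12.pointwise R ρ hρ)).symm).trans (Stmt12.scaling R ρ hρ).symm
  rw [e1, ENNReal.toReal_mul, ENNReal.toReal_mul, ENNReal.toReal_ofReal hρ.le, ← hE ρ]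
  ring
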